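/- (Characteristic formulae for inquisitive states) Let P be a finite set of atomic propositions. For every inquisitive modal model M over P, every nonempty downward-closed family Π of information states of M, and every n ∈ ℕ, there exists an InqML formula χ^n_{M,Π} of modal depth at most n such that for every state-pointed inquisitive modal model M',s' over P: M',s' ⊨ χ^n_{M,Π} if and only if M',s' ~^n M,s for some s ∈ Π. -/

import Mathlib

/-- Formulas of inquisitive modal logic InqML over atomic propositions `P`. -/
inductive InqForm (P : Type) : Type
  | atom : P → InqForm P
  | bot : InqForm P
  | and : InqForm P → InqForm P → InqForm P
  | impl : InqForm P → InqForm P → InqForm P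
  | idisj : InqForm P → InqForm P → InqForm P
  | box : InqForm P → InqForm P
  | boxplus : InqForm P → InqForm P

/-- An inquisitive modal model `M = ⟨W, Σ, V⟩`. -/
structure InqModel (P : Type) where
  W : Type
  Sig : W → Set (Set W)
  Sig_nonempty : ∀ w, (Sig w).Nonempty
  Sig_downward : ∀ w, ∀ s ∈ Sig w, ∀ t ⊆ s, t ∈ Sig w
  V : P → Set W

/-- `σ(w) = ⋃ Σ(w)`. -/
def InqModel.sigma {P : Type} (M : InqModel P) (w : M.W) : Set M.W :=
  ⋃₀ M.Sig w

/-- Support of a formula at an information state `s ⊆ W`. -/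
def support {P : Type} (M : InqModel P) : InqForm P → Set M.W → Prop
  | .atom p, s => s ⊆ M.V p
  | .bot, s => s = ∅
  | .and φ ψ, s => support M φ s ∧ support M ψ s
  | .impl φ ψ, s => ∀ t ⊆ s, support M φ t → support M ψ t
  | .idisj φ ψ, s => support M φ s ∨ support M ψ s
  | .box φ, s => ∀ w ∈ s, support M φ (M.sigma w)
  | .boxplus φ, s => ∀ w ∈ s, ∀ t ∈ M.Sig w, support M φ t

/-- Truth at a world: `M,w ⊨ φ` iff `M,{w} ⊨ φ`. -/
def truth {P : Type} (M : InqModel P) (w : M.W) (φ : InqForm P) : Prop :=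
  support M φ {w}

/-- Modal depth: maximal nesting depth of `□` and `⊞`. -/
def mdepth {P : Type} : InqForm P → ℕ
  | .atom _ => 0
  | .bot => 0
  | .and φ ψ => max (mdepth φ) (mdepth ψ)
  | .impl φ ψ => max (mdepth φ) (mdepth ψ)
  | .idisj φ ψ => max (mdepth φ) (mdepth ψ)
  | .box φ => mdepth φ + 1
  | .boxplus φ => mdepth φ + 1

/-- Lift of a relation between worlds to sets of worlds: every world on either
side is related to some world on the other side. -/
def StateRel {W W' : Type} (Z : W → W' → Prop) (s : Set W) (s' : Set W') : Prop :=
  (∀ w ∈ s, ∃ w' ∈ s', Z w w') ∧ (∀ w' ∈ s', ∃ w ∈ s, Z w w')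

/-- `n`-bisimilarity between worlds of two inquisitive modal models. -/
def NBisimW {P : Type} (M M' : InqModel P) : ℕ → M.W → M'.W → Prop
  | 0, w, w' => ∀ p : P, w ∈ M.V p ↔ w' ∈ M'.V p
  | n + 1, w, w' => (∀ p : P, w ∈ M.V p ↔ w' ∈ M'.V p) ∧
      (∀ s ∈ M.Sig w, ∃ s' ∈ M'.Sig w', StateRel (NBisimW M M' n) s s') ∧
      (∀ s' ∈ M'.Sig w', ∃ s ∈ M.Sig w, StateRel (NBisimW M M' n) s s')

/-- `n`-bisimilarity between information states. -/
def NBisimS {P : Type} (M M' : InqModel P) (n : ℕ) (s : Set M.W) (s' : Set M'.W) : Prop :=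
  StateRel (NBisimW M M' n) s s'

/-- `Z` is a bisimulation between two inquisitive modal models. -/
def IsBisimulation {P : Type} (M M' : InqModel P) (Z : M.W → M'.W → Prop) : Prop :=
  ∀ w w', Z w w' →
    (∀ p : P, w ∈ M.V p ↔ w' ∈ M'.V p) ∧
    (∀ s ∈ M.Sig w, ∃ s' ∈ M'.Sig w', StateRel Z s s') ∧
    (∀ s' ∈ M'.Sig w', ∃ s ∈ M.Sig w, StateRel Z s s')

/-- Bisimilarity of worlds: inclusion in some bisimulation. -/
def BisimW {P : Type} (M M' : InqModel P) (w : M.W) (w' : M'.W) : Prop :=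
  ∃ Z, IsBisimulation M M' Z ∧ Z w w'

/-- Bisimilarity of information states. -/
def BisimS {P : Type} (M M' : InqModel P) (s : Set M.W) (s' : Set M'.W) : Prop :=
  StateRel (BisimW M M') s s'

/- AUX START -/
section Aux
open InqForm

variable {P : Type}

theorem support_mono {M : InqModel P} {φ : InqForm P} {s t : Set M.W}
    (h : support M φ s) (hts : t ⊆ s) : support M φ t := by
  induction φ generalizing s t with
  | atom p => exact hts.trans h
  | bot => subst h; exact Set.subset_eq_empty hts rfl
  | and φ ψ ihφ ihψ => exact ⟨ihφ h.1 hts, ihψ h.2 hts⟩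
  | impl φ ψ ihφ ihψ => exact fun u hu hφ => h u (hu.trans hts) hφ
  | idisj φ ψ ihφ ihψ => exact h.elim (fun h => Or.inl (ihφ h hts)) (fun h => Or.inr (ihψ h hts))
  | box φ ih => exact fun w hw => h w (hts hw)
  | boxplus φ ih => exact fun w hw => h w (hts hw)

/-- Negation. -/
def InqForm.neg (φ : InqForm P) : InqForm P := .impl φ .bot

/-- Top. -/
def InqForm.top : InqForm P := .impl .bot .bot

@[simp] theorem support_top (M : InqModel P) (s : Set M.W) : support M InqForm.top s := by
  intro t _ h; exact h

@[simp] theorem mdepth_top : mdepth (InqForm.top : InqForm P) = 0 := rfl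

@[simp] theorem mdepth_neg (φ : InqForm P) : mdepth φ.neg = mdepth φ := by
  simp [InqForm.neg, mdepth]

theorem support_neg {M : InqModel P} {φ : InqForm P} {s : Set M.W} :
    support M φ.neg s ↔ ∀ w ∈ s, ¬ support M φ {w} := by
  constructor
  · intro h w hw hφ
    have := h {w} (Set.singleton_subset_iff.2 hw) hφ
    exact (Set.singleton_ne_empty w) this
  · intro h t hts hφ
    by_contra hne
    obtain ⟨w, hw⟩ := Set.nonempty_iff_ne_empty.2 hne
    exact h w (hts hw) (support_mono hφ (Set.singleton_subset_iff.2 hw))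

/-- Big conjunction. -/
def bigAnd (l : List (InqForm P)) : InqForm P := l.foldr .and InqForm.top

/-- Big inquisitive disjunction. -/
def bigOr (l : List (InqForm P)) : InqForm P := l.foldr .idisj .bot

theorem support_bigAnd {M : InqModel P} {l : List (InqForm P)} {s : Set M.W} :
    support M (bigAnd l) s ↔ ∀ φ ∈ l, support M φ s := by
  induction l with
  | nil => simp [bigAnd]
  | cons φ l ih =>
    simp only [bigAnd, List.foldr] at *
    show support M φ s ∧ _ ↔ _
    rw [ih]; simp

theorem support_bigOr {M : InqModel P} {l : List (InqForm P)} {s : Set M.W} :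
    support M (bigOr l) s ↔ s = ∅ ∨ ∃ φ ∈ l, support M φ s := by
  induction l with
  | nil => simp [bigOr]; rfl
  | cons φ l ih =>
    simp only [bigOr, List.foldr] at *
    show support M φ s ∨ _ ↔ _
    rw [ih]; simp; tauto

theorem mdepth_bigAnd_le {l : List (InqForm P)} {n : ℕ} (h : ∀ φ ∈ l, mdepth φ ≤ n) :
    mdepth (bigAnd l) ≤ n := by
  induction l with
  | nil => simp [bigAnd, mdepth]
  | cons φ l ih =>
    show max (mdepth φ) (mdepth (bigAnd l)) ≤ n
    exact max_le (h φ (by simp)) (ih fun ψ hψ => h ψ (by simp [hψ]))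

theorem mdepth_bigOr_le {l : List (InqForm P)} {n : ℕ} (h : ∀ φ ∈ l, mdepth φ ≤ n) :
    mdepth (bigOr l) ≤ n := by
  induction l with
  | nil => simp [bigOr, mdepth]
  | cons φ l ih =>
    show max (mdepth φ) (mdepth (bigOr l)) ≤ n
    exact max_le (h φ (by simp)) (ih fun ψ hψ => h ψ (by simp [hψ]))

end Aux

section Aux2
variable {P : Type}

/-- Enumerate a set in a finite type as a list. -/
noncomputable def listOf {α : Type} [Finite α] (S : Set α) : List α :=
  (Set.toFinite S).toFinset.toList

@[simp] theorem mem_listOf {α : Type} [Finite α] {S : Set α} {x : α} :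
    x ∈ listOf S ↔ x ∈ S := by
  simp [listOf]

/-- Abstract `n`-types. -/
def TyN (P : Type) : ℕ → Type
  | 0 => Set P
  | n+1 => Set P × Set (Set (TyN P n))

instance TyN.finite (P : Type) [Finite P] : ∀ n, Finite (TyN P n)
  | 0 => inferInstanceAs (Finite (Set P))
  | n+1 =>
    haveI := TyN.finite P n
    inferInstanceAs (Finite (Set P × Set (Set (TyN P n))))

/-- The `n`-type of a world. -/
def tyW (M : InqModel P) : (n : ℕ) → M.W → TyN P n
  | 0, w => {p | w ∈ M.V p}
  | n+1, w => (({p | w ∈ M.V p}, (fun s => tyW M n '' s) '' M.Sig w) :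
      Set P × Set (Set (TyN P n)))

theorem staterel_iff_image {M M' : InqModel P} {n : ℕ}
    (ih : ∀ (w : M.W) (w' : M'.W), NBisimW M M' n w w' ↔ tyW M n w = tyW M' n w')
    (s : Set M.W) (s' : Set M'.W) :
    StateRel (NBisimW M M' n) s s' ↔ tyW M n '' s = tyW M' n '' s' := by
  constructor
  · rintro ⟨hf, hb⟩
    apply Set.Subset.antisymm
    · rintro τ ⟨w, hw, rfl⟩
      obtain ⟨w', hw', hz⟩ := hf w hw
      exact ⟨w', hw', ((ih w w').1 hz).symm⟩
    · rintro τ ⟨w', hw', rfl⟩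
      obtain ⟨w, hw, hz⟩ := hb w' hw'
      exact ⟨w, hw, (ih w w').1 hz⟩
  · intro h
    constructor
    · intro w hw
      have : tyW M n w ∈ tyW M' n '' s' := h ▸ ⟨w, hw, rfl⟩
      obtain ⟨w', hw', he⟩ := this
      exact ⟨w', hw', (ih w w').2 he.symm⟩
    · intro w' hw'
      have : tyW M' n w' ∈ tyW M n '' s := h ▸ ⟨w', hw', rfl⟩
      obtain ⟨w, hw, he⟩ := this
      exact ⟨w, hw, (ih w w').2 he⟩

theorem nbisimW_iff_wtype {M M' : InqModel P} :
    ∀ (n : ℕ) (w : M.W) (w' : M'.W),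
      NBisimW M M' n w w' ↔ tyW M n w = tyW M' n w'
  | 0, w, w' => by
    show (∀ p : P, w ∈ M.V p ↔ w' ∈ M'.V p) ↔ _
    show _ ↔ ({p | w ∈ M.V p} : Set P) = {p | w' ∈ M'.V p}
    rw [Set.ext_iff]; rfl
  | n+1, w, w' => by
    have ih := fun (v : M.W) (v' : M'.W) => nbisimW_iff_wtype (M := M) (M' := M') n v v'
    show ((∀ p : P, w ∈ M.V p ↔ w' ∈ M'.V p) ∧ _ ∧ _) ↔ _
    show _ ↔ (({p | w ∈ M.V p}, (fun s => tyW M n '' s) '' M.Sig w) :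
        Set P × Set (Set (TyN P n))) = ({p | w' ∈ M'.V p}, (fun s => tyW M' n '' s) '' M'.Sig w')
    rw [Prod.ext_iff]
    constructor
    · rintro ⟨ha, hf, hb⟩
      refine ⟨by rw [Set.ext_iff]; exact ha, ?_⟩
      apply Set.Subset.antisymm
      · rintro T ⟨s, hs, rfl⟩
        obtain ⟨s', hs', hr⟩ := hf s hs
        exact ⟨s', hs', ((staterel_iff_image ih s s').1 hr).symm⟩
      · rintro T ⟨s', hs', rfl⟩
        obtain ⟨s, hs, hr⟩ := hb s' hs'
        exact ⟨s, hs, (staterel_iff_image ih s s').1 hr⟩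
    · rintro ⟨ha, hT⟩
      refine ⟨fun p => by rw [Set.ext_iff] at ha; exact ha p, ?_, ?_⟩
      · intro s hs
        simp only at hT
        have : tyW M n '' s ∈ (fun s => tyW M' n '' s) '' M'.Sig w' := hT ▸ ⟨s, hs, rfl⟩
        obtain ⟨s', hs', he⟩ := this
        exact ⟨s', hs', (staterel_iff_image ih s s').2 he.symm⟩
      · intro s' hs'
        simp only at hT
        have : tyW M' n '' s' ∈ (fun s => tyW M n '' s) '' M.Sig w := hT ▸ ⟨s', hs', rfl⟩
        obtain ⟨s, hs, he⟩ := this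
        exact ⟨s, hs, (staterel_iff_image ih s s').2 he⟩

theorem nbisimS_iff_stype {M M' : InqModel P} {n : ℕ} {s : Set M.W} {s' : Set M'.W} :
    NBisimS M M' n s s' ↔ tyW M n '' s = tyW M' n '' s' :=
  staterel_iff_image (fun w w' => nbisimW_iff_wtype n w w') s s'

/-- Realize any subset of the type-set of a state. -/
theorem realize_subset {M : InqModel P} {n : ℕ} {s : Set M.W} {T : Set (TyN P n)}
    (h : T ⊆ tyW M n '' s) :
    ∃ t ⊆ s, tyW M n '' t = T := by
  refine ⟨{w ∈ s | tyW M n w ∈ T}, fun w hw => hw.1, ?_⟩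
  apply Set.Subset.antisymm
  · rintro τ ⟨w, hw, rfl⟩; exact hw.2
  · intro τ hτ
    obtain ⟨w, hw, rfl⟩ := h hτ
    exact ⟨w, ⟨hw, hτ⟩, rfl⟩

end Aux2

section Aux3
variable {P : Type}

open Classical in
/-- Formula characterizing the atomic type of all worlds of a state. -/
noncomputable def atomForm [Finite P] (A : Set P) : InqForm P :=
  bigAnd ((listOf (Set.univ : Set P)).map fun p =>
    if p ∈ A then InqForm.atom p else (InqForm.atom p).neg)

theorem support_atomForm [Finite P] {M : InqModel P} {A : Set P} {s : Set M.W} :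
    support M (atomForm A) s ↔ ∀ w ∈ s, {p | w ∈ M.V p} = A := by
  classical
  rw [atomForm, support_bigAnd]
  constructor
  · intro h w hw
    ext p
    have hp := h _ (List.mem_map.2 ⟨p, mem_listOf.2 trivial, rfl⟩)
    simp only [Set.mem_setOf_eq]
    by_cases hpA : p ∈ A
    · rw [if_pos hpA] at hp
      exact ⟨fun _ => hpA, fun _ => hp hw⟩
    · rw [if_neg hpA] at hp
      rw [support_neg] at hp
      exact ⟨fun hwp => absurd (Set.singleton_subset_iff.2 hwp) (hp w hw), fun h => absurd h hpA⟩
  · intro h φ hφ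
    obtain ⟨p, _, rfl⟩ := List.mem_map.1 hφ
    by_cases hpA : p ∈ A
    · rw [if_pos hpA]
      intro w hw
      have := h w hw
      rw [Set.ext_iff] at this
      exact (this p).2 hpA
    · rw [if_neg hpA]
      rw [support_neg]
      intro w hw hc
      have := h w hw
      rw [Set.ext_iff] at this
      exact hpA ((this p).1 (hc rfl))

theorem mdepth_atomForm [Finite P] {A : Set P} : mdepth (atomForm (P := P) A) ≤ 0 := by
  classical
  apply mdepth_bigAnd_le
  intro φ hφ
  obtain ⟨p, _, rfl⟩ := List.mem_map.1 hφ
  split <;> simp [mdepth]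

/-- Classical ("flat") disjunction over the `f`-images of a set of types. -/
noncomputable def dformAux {α : Type} [Finite α] (f : α → InqForm P) (T : Set α) : InqForm P :=
  (bigAnd ((listOf T).map fun τ => (f τ).neg)).neg

theorem mdepth_dformAux {α : Type} [Finite α] {f : α → InqForm P} {T : Set α} {n : ℕ}
    (hf : ∀ τ, mdepth (f τ) ≤ n) : mdepth (dformAux f T) ≤ n := by
  rw [dformAux, mdepth_neg]
  apply mdepth_bigAnd_le
  intro φ hφ
  obtain ⟨τ, _, rfl⟩ := List.mem_map.1 hφ
  rw [mdepth_neg]; exact hf τ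

theorem support_dformAux {α : Type} [Finite α] {M : InqModel P} {f : α → InqForm P}
    {g : M.W → α} (hf : ∀ τ (s : Set M.W), support M (f τ) s ↔ ∀ w ∈ s, g w = τ)
    (T : Set α) (s : Set M.W) :
    support M (dformAux f T) s ↔ ∀ w ∈ s, g w ∈ T := by
  rw [dformAux, support_neg]
  apply forall₂_congr
  intro w hw
  rw [support_bigAnd]
  constructor
  · intro h
    by_contra hgT
    apply h
    intro φ hφ
    obtain ⟨τ, hτ, rfl⟩ := List.mem_map.1 hφ
    rw [support_neg]
    intro v hv hc
    rw [Set.mem_singleton_iff] at hv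
    subst hv
    rw [hf] at hc
    exact hgT (Set.mem_of_eq_of_mem ((hc v rfl).symm ▸ rfl : g v = τ) (mem_listOf.1 hτ))
  · intro hgT h
    have := h _ (List.mem_map.2 ⟨g w, mem_listOf.2 hgT, rfl⟩)
    rw [support_neg] at this
    exact this w rfl ((hf (g w) {w}).2 (by rintro v rfl; rfl))

end Aux3

section Aux4
variable {P : Type}

/-- The second component of an `(n+1)`-type of an actual world: contains `∅`
and is downward closed. -/
theorem tyW_snd_props (M : InqModel P) (n : ℕ) (w : M.W) :
    (∅ ∈ (fun s => tyW M n '' s) '' M.Sig w) ∧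
      (∀ T ∈ (fun s => tyW M n '' s) '' M.Sig w, ∀ T' ⊆ T,
        T' ∈ (fun s => tyW M n '' s) '' M.Sig w) := by
  constructor
  · obtain ⟨s, hs⟩ := M.Sig_nonempty w
    exact ⟨∅, M.Sig_downward w s hs ∅ (Set.empty_subset s), Set.image_empty _⟩
  · rintro T ⟨t, ht, rfl⟩ T' hT'
    obtain ⟨t', ht't, ht'⟩ := realize_subset hT'
    exact ⟨t', M.Sig_downward w t ht t' ht't, ht'⟩

open Classical in
/-- Characteristic formula of the `n`-type `τ`. -/
noncomputable def fW (P : Type) [Finite P] : (n : ℕ) → TyN P n → InqForm P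
  | 0, A => atomForm A
  | n+1, τ =>
    let A : Set P := τ.1
    let S : Set (Set (TyN P n)) := τ.2
    if ∅ ∈ S ∧ ∀ T ∈ S, ∀ T' ⊆ T, T' ∈ S then
      .and (atomForm A)
        (.and (.boxplus (bigOr ((listOf S).map (dformAux (fW P n)))))
          (bigAnd ((listOf S).map fun T =>
            if T = ∅ then InqForm.top
            else (InqForm.boxplus
              (bigOr ((listOf T).map fun τ' => dformAux (fW P n) ({τ'}ᶜ)))).neg)))
    else .bot

theorem mdepth_fW [Finite P] : ∀ (n : ℕ) (τ : TyN P n), mdepth (fW P n τ) ≤ n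
  | 0, A => mdepth_atomForm
  | n+1, τ => by
    rw [fW]
    split
    · refine max_le (mdepth_atomForm.trans (Nat.zero_le _)) (max_le ?_ ?_)
      · show mdepth _ + 1 ≤ n + 1
        refine Nat.succ_le_succ (mdepth_bigOr_le ?_)
        intro φ hφ
        obtain ⟨T, _, rfl⟩ := List.mem_map.1 hφ
        exact mdepth_dformAux (fun τ' => mdepth_fW n τ')
      · apply mdepth_bigAnd_le
        intro φ hφ
        obtain ⟨T, _, rfl⟩ := List.mem_map.1 hφ
        split
        · simp
        · rw [mdepth_neg]
          show mdepth _ + 1 ≤ n + 1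
          refine Nat.succ_le_succ (mdepth_bigOr_le ?_)
          intro ψ hψ
          obtain ⟨τ', _, rfl⟩ := List.mem_map.1 hψ
          exact mdepth_dformAux (fun τ'' => mdepth_fW n τ'')
    · exact Nat.zero_le _

end Aux4

section Aux5
variable {P : Type}

theorem tyW_succ_eq_iff (M : InqModel P) (n : ℕ) (w : M.W) (A : Set P)
    (S : Set (Set (TyN P n))) :
    tyW M (n+1) w = ((A, S) : Set P × Set (Set (TyN P n))) ↔
      ({p | w ∈ M.V p} = A ∧ (fun s => tyW M n '' s) '' M.Sig w = S) := by
  show (({p | w ∈ M.V p}, (fun s => tyW M n '' s) '' M.Sig w) :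
      Set P × Set (Set (TyN P n))) = (A, S) ↔ _
  rw [Prod.mk.injEq]

theorem fW_spec [Finite P] : ∀ (n : ℕ) (τ : TyN P n) (M : InqModel P) (s : Set M.W),
    support M (fW P n τ) s ↔ ∀ w ∈ s, tyW M n w = τ
  | 0, A, M, s => by
    rw [fW]; refine (support_atomForm (A := (A : Set P))).trans ?_
    rfl
  | n+1, τ, M, s => by
    classical
    have ih := fun (τ' : TyN P n) (s' : Set M.W) => fW_spec n τ' M s'
    have hd : ∀ (T : Set (TyN P n)) (t : Set M.W),
        support M (dformAux (fW P n) T) t ↔ ∀ v ∈ t, tyW M n v ∈ T :=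
      fun T t => support_dformAux (g := tyW M n) ih T t
    obtain ⟨A, S⟩ := (τ : Set P × Set (Set (TyN P n)))
    erw [fW]
    by_cases hS : ∅ ∈ S ∧ ∀ T ∈ S, ∀ T' ⊆ T, T' ∈ S
    · rw [if_pos hS]
      obtain ⟨h0, hdc⟩ := hS
      have hC2 : (∀ w ∈ s, ∀ t ∈ M.Sig w,
          support M (bigOr ((listOf S).map (dformAux (fW P n)))) t) ↔
          ∀ w ∈ s, ∀ t ∈ M.Sig w, tyW M n '' t ∈ S := by
        apply forall₂_congr; intro w _; apply forall₂_congr; intro t _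
        rw [support_bigOr]
        constructor
        · rintro (rfl | ⟨φ, hφ, hsup⟩)
          · rw [Set.image_empty]; exact h0
          · obtain ⟨T, hT, rfl⟩ := List.mem_map.1 hφ
            rw [hd] at hsup
            exact hdc T (mem_listOf.1 hT) _ (by rintro τ' ⟨v, hv, rfl⟩; exact hsup v hv)
        · intro hmem
          exact Or.inr ⟨_, List.mem_map.2 ⟨_, mem_listOf.2 hmem, rfl⟩,
            (hd _ t).2 fun v hv => ⟨v, hv, rfl⟩⟩
      have hC3 : support M (bigAnd ((listOf S).map fun T =>
            if T = ∅ then InqForm.top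
            else (InqForm.boxplus
              (bigOr ((listOf T).map fun τ' => dformAux (fW P n) ({τ'}ᶜ)))).neg)) s ↔
          ∀ T ∈ S, ∀ w ∈ s, T ∈ (fun t => tyW M n '' t) '' M.Sig w := by
        rw [support_bigAnd]
        constructor
        · intro h T hT w hw
          have hφ := h _ (List.mem_map.2 ⟨T, mem_listOf.2 hT, rfl⟩)
          by_cases hTe : T = ∅
          · subst hTe
            obtain ⟨t, ht⟩ := M.Sig_nonempty w
            exact ⟨∅, M.Sig_downward w t ht ∅ (Set.empty_subset t), Set.image_empty _⟩
          · rw [if_neg hTe, support_neg] at hφ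
            have hnb := hφ w hw
            have hx : ¬ ∀ t ∈ M.Sig w,
                support M (bigOr ((listOf T).map fun τ' => dformAux (fW P n) ({τ'}ᶜ))) t := by
              intro hc
              exact hnb (fun v hv => (Set.mem_singleton_iff.1 hv) ▸ hc)
            push_neg at hx
            obtain ⟨t, ht, hns⟩ := hx
            rw [support_bigOr] at hns
            push_neg at hns
            obtain ⟨hne, hall⟩ := hns
            have hsub : T ⊆ tyW M n '' t := by
              intro τ' hτ'
              have h1 := hall _ (List.mem_map.2 ⟨τ', mem_listOf.2 hτ', rfl⟩)
              rw [hd] at h1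
              push_neg at h1
              obtain ⟨v, hv, hvτ⟩ := h1
              exact ⟨v, hv, by simpa using hvτ⟩
            obtain ⟨t', ht't, ht'⟩ := realize_subset hsub
            exact ⟨t', M.Sig_downward w t ht t' ht't, ht'⟩
        · intro h φ hφ
          obtain ⟨T, hT, rfl⟩ := List.mem_map.1 hφ
          by_cases hTe : T = ∅
          · rw [if_pos hTe]; exact support_top M s
          · rw [if_neg hTe, support_neg]
            intro w hw hc
            obtain ⟨t, ht, himg⟩ := h T (mem_listOf.1 hT) w hw
            have hsupt := hc w rfl t ht
            rw [support_bigOr] at hsupt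
            rcases hsupt with rfl | ⟨ψ, hψ, hsup⟩
            · simp only [Set.image_empty] at himg
              exact hTe himg.symm
            · obtain ⟨τ', hτ', rfl⟩ := List.mem_map.1 hψ
              rw [hd] at hsup
              have hm : τ' ∈ tyW M n '' t := by
                rw [show tyW M n '' t = T from himg]
                exact mem_listOf.1 hτ'
              obtain ⟨v, hv, hvτ⟩ := hm
              have := hsup v hv
              simp [hvτ] at this
      show support M (atomForm A) s ∧ (∀ w ∈ s, ∀ t ∈ M.Sig w, _) ∧ _ ↔ _
      rw [support_atomForm, hC2, hC3]
      constructor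
      · rintro ⟨h1, h2, h3⟩ w hw
        rw [tyW_succ_eq_iff]
        refine ⟨h1 w hw, Set.Subset.antisymm ?_ fun T hT => h3 T hT w hw⟩
        rintro T ⟨t, ht, rfl⟩
        exact h2 w hw t ht
      · intro h
        refine ⟨fun w hw => ((tyW_succ_eq_iff M n w A S).1 (h w hw)).1, ?_, ?_⟩
        · intro w hw t ht
          have := ((tyW_succ_eq_iff M n w A S).1 (h w hw)).2
          exact this ▸ ⟨t, ht, rfl⟩
        · intro T hT w hw
          have := ((tyW_succ_eq_iff M n w A S).1 (h w hw)).2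
          exact this.symm ▸ hT
    · rw [if_neg hS]
      show s = ∅ ↔ _
      constructor
      · rintro rfl w hw; exact absurd hw (Set.notMem_empty w)
      · intro h
        ext w
        simp only [Set.mem_empty_iff_false, iff_false]
        intro hw
        have he := ((tyW_succ_eq_iff M n w A S).1 (h w hw)).2
        exact hS (he ▸ tyW_snd_props M n w)

end Aux5

/-- **Characteristic formulae for inquisitive states**: over a finite set of
atomic propositions, for every nonempty downward-closed family `Π` of
information states of `M` there is a formula of modal depth at most `n`
supported by exactly those state-pointed models `n`-bisimilar to some `s ∈ Π`. -/
theorem characteristic_formula_inqstate {P : Type} [Finite P]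
    (M : InqModel P) (Pi : Set (Set M.W)) (hne : Pi.Nonempty)
    (hdc : ∀ s ∈ Pi, ∀ t ⊆ s, t ∈ Pi) (n : ℕ) :
    ∃ χ : InqForm P, mdepth χ ≤ n ∧
      ∀ (M' : InqModel P) (s' : Set M'.W),
        support M' χ s' ↔ ∃ s ∈ Pi, NBisimS M' M n s' s := by
  classical
  refine ⟨bigOr ((listOf ((fun s => tyW M n '' s) '' Pi)).map (dformAux (fW P n))), ?_, ?_⟩
  · apply mdepth_bigOr_le
    intro φ hφ
    obtain ⟨T, _, rfl⟩ := List.mem_map.1 hφ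
    exact mdepth_dformAux (fun τ => mdepth_fW n τ)
  · intro M' s'
    have hd : ∀ (T : Set (TyN P n)) (t : Set M'.W),
        support M' (dformAux (fW P n) T) t ↔ ∀ v ∈ t, tyW M' n v ∈ T :=
      fun T t => support_dformAux (fun τ u => fW_spec n τ M' u) T t
    rw [support_bigOr]
    constructor
    · rintro (rfl | ⟨φ, hφ, hsup⟩)
      · obtain ⟨s0, hs0⟩ := hne
        refine ⟨∅, hdc s0 hs0 ∅ (Set.empty_subset _), ?_, ?_⟩ <;>
          exact fun w hw => absurd hw (Set.notMem_empty w)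
      · obtain ⟨T, hT, rfl⟩ := List.mem_map.1 hφ
        rw [hd] at hsup
        obtain ⟨s0, hs0, himg⟩ := mem_listOf.1 hT
        have hsub : tyW M' n '' s' ⊆ tyW M n '' s0 := by
          rintro τ ⟨v, hv, rfl⟩
          rw [show tyW M n '' s0 = T from himg]
          exact hsup v hv
        obtain ⟨t, hts0, himg2⟩ := realize_subset hsub
        exact ⟨t, hdc s0 hs0 t hts0, nbisimS_iff_stype.2 himg2.symm⟩
    · rintro ⟨s0, hs0, hb⟩
      rw [nbisimS_iff_stype] at hb
      right
      refine ⟨_, List.mem_map.2 ⟨tyW M n '' s0, mem_listOf.2 ⟨s0, hs0, rfl⟩, rfl⟩, ?_⟩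
      rw [hd]
      intro v hv
      exact hb ▸ (⟨v, hv, rfl⟩ : tyW M' n v ∈ tyW M' n '' s')
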